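/- Let Y_1, ..., Y_m be {0,1}-valued random variables, each with expectation E[Y_i] = q, that are pairwise negatively correlated, i.e. E[Y_i Y_j] ≤ q² for all i ≠ j. If m·q ≥ 1, then Pr[ Σ_{i=1}^m Y_i > m·q/2 ] ≥ 1/8. -/

import Mathlib

open MeasureTheory

/-- Paley–Zygmund-type bound for pairwise negatively correlated
indicator random variables. -/
theorem paley_zygmund_indicators {Ω : Type*} [MeasurableSpace Ω] (μ : Measure Ω)
    [IsProbabilityMeasure μ] (m : ℕ) (Y : Fin m → Ω → ℝ) (q : ℝ)
    (hmeas : ∀ i, Measurable (Y i))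
    (h01 : ∀ i ω, Y i ω = 0 ∨ Y i ω = 1)
    (hq : ∀ i, ∫ ω, Y i ω ∂μ = q)
    (hneg : ∀ i j, i ≠ j → ∫ ω, Y i ω * Y j ω ∂μ ≤ q ^ 2)
    (hmq : 1 ≤ (m : ℝ) * q) :
    ENNReal.ofReal (1 / 8) ≤ μ {ω | (m : ℝ) * q / 2 < ∑ i, Y i ω} := by
  set S : Ω → ℝ := fun ω => ∑ i, Y i ω with hSdef
  have hY0 : ∀ i ω, 0 ≤ Y i ω := fun i ω => by rcases h01 i ω with h | h <;> simp [h]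
  have hY1 : ∀ i ω, Y i ω ≤ 1 := fun i ω => by rcases h01 i ω with h | h <;> simp [h]
  have hS_meas : Measurable S := Finset.measurable_sum _ fun i _ => hmeas i
  have hA : MeasurableSet {ω | (m : ℝ) * q / 2 < S ω} :=
    measurableSet_lt measurable_const hS_meas
  set A := {ω | (m : ℝ) * q / 2 < S ω} with hAdef
  have hmq0 : 0 < (m : ℝ) * q := lt_of_lt_of_le one_pos hmq
  have hq0 : 0 < q := by
    by_contra h
    push_neg at h
    nlinarith [Nat.cast_nonneg (α := ℝ) m]
  -- integrability
  have hYint : ∀ i, Integrable (Y i) μ := by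
    intro i
    refine Integrable.mono' (integrable_const 1) (hmeas i).aestronglyMeasurable ?_
    filter_upwards with ω
    rw [Real.norm_eq_abs, abs_of_nonneg (hY0 i ω)]
    exact hY1 i ω
  have hYYint : ∀ i j, Integrable (fun ω => Y i ω * Y j ω) μ := by
    intro i j
    refine Integrable.mono' (integrable_const 1) ((hmeas i).mul (hmeas j)).aestronglyMeasurable ?_
    filter_upwards with ω
    rw [Real.norm_eq_abs, abs_of_nonneg (mul_nonneg (hY0 i ω) (hY0 j ω))]
    exact mul_le_one₀ (hY1 i ω) (hY0 j ω) (hY1 j ω)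
  have hSint : Integrable S μ := integrable_finset_sum _ fun i _ => hYint i
  have hS2int : Integrable (fun ω => S ω ^ 2) μ := by
    have : (fun ω => S ω ^ 2) = fun ω => ∑ i, ∑ j, Y i ω * Y j ω := by
      funext ω
      rw [hSdef]
      simp [sq, Finset.sum_mul_sum]
    rw [this]
    exact integrable_finset_sum _ fun i _ => integrable_finset_sum _ fun j _ => hYYint i j
  -- first moment
  have hES : ∫ ω, S ω ∂μ = (m : ℝ) * q := by
    rw [hSdef]
    rw [integral_finset_sum _ fun i _ => hYint i]
    simp [hq]
  -- second moment
  have hES2 : ∫ ω, S ω ^ 2 ∂μ ≤ 2 * ((m : ℝ) * q) ^ 2 := by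
    have hexp : ∫ ω, S ω ^ 2 ∂μ = ∑ i, ∑ j, ∫ ω, Y i ω * Y j ω ∂μ := by
      have : (fun ω => S ω ^ 2) = fun ω => ∑ i, ∑ j, Y i ω * Y j ω := by
        funext ω; rw [hSdef]; simp [sq, Finset.sum_mul_sum]
      rw [this, integral_finset_sum _ fun i _ => integrable_finset_sum _ fun j _ => hYYint i j]
      exact Finset.sum_congr rfl fun i _ => integral_finset_sum _ fun j _ => hYYint i j
    rw [hexp]
    have hinner : ∀ i : Fin m, ∑ j, ∫ ω, Y i ω * Y j ω ∂μ ≤ 2 * (m : ℝ) * q ^ 2 := by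
      intro i
      have hsplit : ∑ j, ∫ ω, Y i ω * Y j ω ∂μ =
          (∫ ω, Y i ω * Y i ω ∂μ) + ∑ j ∈ Finset.univ.erase i, ∫ ω, Y i ω * Y j ω ∂μ :=
        (Finset.add_sum_erase _ _ (Finset.mem_univ i)).symm
      rw [hsplit]
      have hdiag : ∫ ω, Y i ω * Y i ω ∂μ = q := by
        have : (fun ω => Y i ω * Y i ω) = Y i := by
          funext ω; rcases h01 i ω with h | h <;> simp [h]
        rw [this, hq]
      have hoff : ∑ j ∈ Finset.univ.erase i, ∫ ω, Y i ω * Y j ω ∂μ ≤ (m : ℝ) * q ^ 2 := by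
        calc ∑ j ∈ Finset.univ.erase i, ∫ ω, Y i ω * Y j ω ∂μ
            ≤ ∑ _j ∈ Finset.univ.erase i, q ^ 2 :=
              Finset.sum_le_sum fun j hj => hneg i j (Finset.ne_of_mem_erase hj).symm
          _ = ((Finset.univ.erase i).card : ℝ) * q ^ 2 := by
              rw [Finset.sum_const, nsmul_eq_mul]
          _ ≤ (m : ℝ) * q ^ 2 := by
              apply mul_le_mul_of_nonneg_right _ (sq_nonneg q)
              exact_mod_cast Finset.card_le_card (Finset.erase_subset _ _) |>.trans
                (le_of_eq (Finset.card_univ.trans (Fintype.card_fin m)))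
      have hqle : q ≤ (m : ℝ) * q ^ 2 := by nlinarith
      rw [hdiag]
      linarith
    calc ∑ i, ∑ j, ∫ ω, Y i ω * Y j ω ∂μ
        ≤ ∑ _i : Fin m, 2 * (m : ℝ) * q ^ 2 := Finset.sum_le_sum fun i _ => hinner i
      _ = (m : ℝ) * (2 * (m : ℝ) * q ^ 2) := by
          rw [Finset.sum_const, nsmul_eq_mul]; simp
      _ = 2 * ((m : ℝ) * q) ^ 2 := by ring
  -- pointwise inequality
  have hpoint : ∀ ω, S ω ≤ S ω ^ 2 / (8 * ((m : ℝ) * q)) +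
      2 * ((m : ℝ) * q) * A.indicator (fun _ => (1 : ℝ)) ω + (m : ℝ) * q / 2 := by
    intro ω
    by_cases hω : ω ∈ A
    · rw [Set.indicator_of_mem hω]
      have h8 : 0 < 8 * ((m : ℝ) * q) := by linarith
      have key : S ω ≤ S ω ^ 2 / (8 * ((m : ℝ) * q)) + 2 * ((m : ℝ) * q) := by
        rw [div_add' _ _ _ (ne_of_gt h8), le_div_iff₀ h8]
        nlinarith [sq_nonneg (S ω - 4 * ((m : ℝ) * q))]
      linarith
    · rw [Set.indicator_of_notMem hω]
      have hSle : S ω ≤ (m : ℝ) * q / 2 := le_of_not_gt fun h => hω h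
      have hnn : 0 ≤ S ω ^ 2 / (8 * ((m : ℝ) * q)) :=
        div_nonneg (sq_nonneg _) (by linarith)
      linarith
  -- integrate the pointwise inequality
  have hindint : Integrable (A.indicator (fun _ => (1 : ℝ))) μ :=
    (integrable_const (1 : ℝ)).indicator hA
  have hrhsint : Integrable (fun ω => S ω ^ 2 / (8 * ((m : ℝ) * q)) +
      2 * ((m : ℝ) * q) * A.indicator (fun _ => (1 : ℝ)) ω + (m : ℝ) * q / 2) μ := by
    apply Integrable.add
    · exact (hS2int.div_const _).add (hindint.const_mul _)
    · exact integrable_const _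
  have hint_le : ∫ ω, S ω ∂μ ≤ ∫ ω, (S ω ^ 2 / (8 * ((m : ℝ) * q)) +
      2 * ((m : ℝ) * q) * A.indicator (fun _ => (1 : ℝ)) ω + (m : ℝ) * q / 2) ∂μ :=
    integral_mono hSint hrhsint hpoint
  have hind_int : ∫ ω, A.indicator (fun _ => (1 : ℝ)) ω ∂μ = (μ A).toReal := by
    rw [integral_indicator_const (1 : ℝ) hA]; simp; rfl
  rw [hES] at hint_le
  have hXint : Integrable (fun ω => S ω ^ 2 / (8 * ((m : ℝ) * q))) μ := hS2int.div_const _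
  have hZint : Integrable (fun ω => 2 * ((m : ℝ) * q) * A.indicator (fun _ => (1 : ℝ)) ω) μ :=
    hindint.const_mul _
  have hXZint : Integrable (fun ω => S ω ^ 2 / (8 * ((m : ℝ) * q)) +
      2 * ((m : ℝ) * q) * A.indicator (fun _ => (1 : ℝ)) ω) μ := hXint.add hZint
  rw [integral_add hXZint (integrable_const _),
    integral_add hXint hZint, integral_div,
    integral_const_mul, hind_int, integral_const] at hint_le
  simp only [measure_univ, probReal_univ, ENNReal.toReal_one, smul_eq_mul, one_mul] at hint_le
  have hp : (1 : ℝ) / 8 ≤ (μ A).toReal := by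
    have h2 : (∫ ω, S ω ^ 2 ∂μ) / (8 * ((m : ℝ) * q)) ≤ ((m : ℝ) * q) / 4 := by
      rw [div_le_div_iff₀ (by linarith) (by norm_num)]
      nlinarith
    nlinarith [hint_le, h2]
  have hfin : μ A ≠ ⊤ := measure_ne_top μ A
  calc ENNReal.ofReal (1 / 8) ≤ ENNReal.ofReal (μ A).toReal := ENNReal.ofReal_le_ofReal hp
    _ = μ A := ENNReal.ofReal_toReal hfin
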